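/- For every positive integer n₀ and positive integer l, there exists k ≥ 1 such that λ(n₀ + l·k) = -λ(n₀). -/
import Mathlib

/-- The Liouville function `λ(n) = (-1)^Ω(n)`. -/
def liouville (n : ℕ) : ℤ := (-1) ^ (ArithmeticFunction.cardFactors n)

/-- For every positive `n₀` and `l` there is `k ≥ 1` with `λ(n₀ + l·k) = -λ(n₀)`. -/
theorem exists_sign_flip_in_AP (n₀ l : ℕ) (hn₀ : 0 < n₀) (hl : 0 < l) :
    ∃ k : ℕ, 1 ≤ k ∧ liouville (n₀ + l * k) = -liouville n₀ := by
  obtain ⟨p, hp, hlp, hmod⟩ := Nat.exists_prime_gt_modEq_one (k := l) l hl.ne'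
  -- p ≡ 1 [MOD l], p > l
  have h1p : 1 ≤ p := hp.one_lt.le
  have hdvd : l ∣ p - 1 := (Nat.modEq_iff_dvd' h1p).mp hmod.symm
  obtain ⟨m, hm⟩ := hdvd
  have hm1 : 1 ≤ m := by
    rcases Nat.eq_zero_or_pos m with h | h
    · subst h; simp at hm; omega
    · exact h
  refine ⟨m * n₀, Nat.one_le_iff_ne_zero.mpr (by positivity), ?_⟩
  have hkey : n₀ + l * (m * n₀) = p * n₀ := by
    have : p = 1 + l * m := by omega
    rw [this]; ring
  rw [hkey]
  unfold liouville
  rw [ArithmeticFunction.cardFactors_mul hp.pos.ne' hn₀.ne',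
    ArithmeticFunction.cardFactors_apply_prime hp, pow_add, pow_one]
  ring
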